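/- Monotonicity of equilibrium protection in K: fix the population size vector m and β_IA ∈ (0,1]. If K₁ ≤ K₂ are positive integers and x¹, x² are Nash equilibria of the population games with propagation parameters K₁, K₂ respectively, then Σ_{d ∈ 𝒟} x¹_{d,P} ≤ Σ_{d ∈ 𝒟} x²_{d,P}. -/

import Mathlib

open Finset

/-- The three actions: Protection, No action, Insurance. -/
inductive Act | P | N | I
deriving DecidableEq

/-- `𝒟 = {1, …, D_max}`. -/
def Dset (Dmax : ℕ) : Finset ℕ := Finset.Icc 1 Dmax

/-- Weighted degree distribution `w_d = d·m_d / ∑ d'·m_{d'}`. -/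
noncomputable def wgt (Dmax : ℕ) (m : ℕ → ℝ) (d : ℕ) : ℝ :=
  (d : ℝ) * m d / ∑ d' ∈ Dset Dmax, (d' : ℝ) * m d'

/-- `γ(x) = β_IA · ∑_d w_d (g_{d,P} p_P + (1 − g_{d,P}) p_U)`, where
`g_{d,P} = x_{d,P}/m_d`. -/
noncomputable def gam (Dmax : ℕ) (m : ℕ → ℝ) (pP pU βIA : ℝ) (xP : ℕ → ℝ) : ℝ :=
  βIA * ∑ d ∈ Dset Dmax, wgt Dmax m d * ((xP d / m d) * pP + (1 - xP d / m d) * pU)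

/-- `λ(x) = β_IA · ∑_d w_d (d−1) (g_{d,P} p_P + (1 − g_{d,P}) p_U)`. -/
noncomputable def lamb (Dmax : ℕ) (m : ℕ → ℝ) (pP pU βIA : ℝ) (xP : ℕ → ℝ) : ℝ :=
  βIA * ∑ d ∈ Dset Dmax,
    wgt Dmax m d * ((d : ℝ) - 1) * ((xP d / m d) * pP + (1 - xP d / m d) * pU)

/-- Risk exposure `e(x) = γ(x) · ∑_{k=1}^{K} λ(x)^{k−1}`. -/
noncomputable def expo (Dmax : ℕ) (m : ℕ → ℝ) (pP pU βIA : ℝ) (K : ℕ)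
    (xP : ℕ → ℝ) : ℝ :=
  gam Dmax m pP pU βIA xP * ∑ k ∈ Finset.range K, lamb Dmax m pP pU βIA xP ^ k

/-- Cost of a degree-`d` node playing action `a` at a social state with protected
masses `xP`:  `C_{d,P} = τ(1 + d·e)L_P + c_P`, `C_{d,N} = τ(1 + d·e)L_U`,
`C_{d,I} = C_{d,N} + c_I − min(Cov_max, ξ·max(0, C_{d,N} − ded))`. -/
noncomputable def cost (Dmax : ℕ) (m : ℕ → ℝ) (pP pU βIA τ LP LU cP cI ξ ded Cov : ℝ)
    (K : ℕ) (xP : ℕ → ℝ) (d : ℕ) : Act → ℝ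
  | Act.P => τ * (1 + (d : ℝ) * expo Dmax m pP pU βIA K xP) * LP + cP
  | Act.N => τ * (1 + (d : ℝ) * expo Dmax m pP pU βIA K xP) * LU
  | Act.I => τ * (1 + (d : ℝ) * expo Dmax m pP pU βIA K xP) * LU + cI
      - min Cov (ξ * max 0 (τ * (1 + (d : ℝ) * expo Dmax m pP pU βIA K xP) * LU - ded))

/-- Admissible social state: nonnegative masses summing to `m_d` within each population. -/
def isState (Dmax : ℕ) (m : ℕ → ℝ) (x : ℕ → Act → ℝ) : Prop :=
  ∀ d ∈ Dset Dmax, (∀ a : Act, 0 ≤ x d a) ∧ x d Act.P + x d Act.N + x d Act.I = m d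

/-- Nash equilibrium: any action played by a positive mass of population `d`
minimizes the cost for population `d`. -/
def isNE (Dmax : ℕ) (m : ℕ → ℝ) (pP pU βIA τ LP LU cP cI ξ ded Cov : ℝ)
    (K : ℕ) (x : ℕ → Act → ℝ) : Prop :=
  isState Dmax m x ∧
    ∀ d ∈ Dset Dmax, ∀ a : Act, 0 < x d a →
      ∀ a' : Act, cost Dmax m pP pU βIA τ LP LU cP cI ξ ded Cov K (fun d' => x d' Act.P) d a
        ≤ cost Dmax m pP pU βIA τ LP LU cP cI ξ ded Cov K (fun d' => x d' Act.P) d a'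

-- auxiliary lemmas to insert before the theorem

lemma max_sub_max_le (b c : ℝ) (h : b ≤ c) : max 0 c - max 0 b ≤ c - b := by
  rcases le_total c 0 with h' | h'
  · rw [max_eq_left h', max_eq_left (h.trans h')]
    linarith
  · rw [max_eq_right h']
    have := le_max_right 0 b
    linarith

lemma min_sub_min_le (a b c : ℝ) (h : b ≤ c) : min a c - min a b ≤ c - b := by
  rcases le_total a b with h' | h'
  · rw [min_eq_left h', min_eq_left (h'.trans h)]
    linarith
  · rw [min_eq_right h']
    have := min_le_right a c
    linarith

noncomputable def fNx (τ LP LU cP : ℝ) (u : ℝ) : ℝ :=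
  τ * (1 + u) * LU - (τ * (1 + u) * LP + cP)

noncomputable def fIx (τ LP LU cP cI ξ ded Cov : ℝ) (u : ℝ) : ℝ :=
  τ * (1 + u) * LU + cI - min Cov (ξ * max 0 (τ * (1 + u) * LU - ded))
    - (τ * (1 + u) * LP + cP)

lemma costN_sub (Dmax : ℕ) (m : ℕ → ℝ) (pP pU βIA τ LP LU cP cI ξ ded Cov : ℝ)
    (K : ℕ) (xP : ℕ → ℝ) (d : ℕ) :
    cost Dmax m pP pU βIA τ LP LU cP cI ξ ded Cov K xP d Act.N -
      cost Dmax m pP pU βIA τ LP LU cP cI ξ ded Cov K xP d Act.P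
      = fNx τ LP LU cP ((d : ℝ) * expo Dmax m pP pU βIA K xP) := rfl

lemma costI_sub (Dmax : ℕ) (m : ℕ → ℝ) (pP pU βIA τ LP LU cP cI ξ ded Cov : ℝ)
    (K : ℕ) (xP : ℕ → ℝ) (d : ℕ) :
    cost Dmax m pP pU βIA τ LP LU cP cI ξ ded Cov K xP d Act.I -
      cost Dmax m pP pU βIA τ LP LU cP cI ξ ded Cov K xP d Act.P
      = fIx τ LP LU cP cI ξ ded Cov ((d : ℝ) * expo Dmax m pP pU βIA K xP) := rfl

lemma fNx_mono (cP : ℝ) {τ LP LU : ℝ} (hτ0 : 0 < τ) (hLPU : LP < LU)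
    {u v : ℝ} (h : u < v) : fNx τ LP LU cP u < fNx τ LP LU cP v := by
  unfold fNx
  nlinarith [mul_pos (mul_pos hτ0 (sub_pos.2 h)) (sub_pos.2 hLPU)]

lemma fIx_mono (cP cI ded Cov : ℝ) {τ LP LU ξ : ℝ} (hτ0 : 0 < τ) (hLU : 0 < LU)
    (hξ0 : 0 ≤ ξ) (hL : LP < (1 - ξ) * LU) {u v : ℝ} (h : u < v) :
    fIx τ LP LU cP cI ξ ded Cov u < fIx τ LP LU cP cI ξ ded Cov v := by
  have hab : τ * (1 + u) * LU ≤ τ * (1 + v) * LU := by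
    nlinarith [mul_pos (mul_pos hτ0 (sub_pos.2 h)) hLU]
  have h1 : max 0 (τ * (1 + v) * LU - ded) - max 0 (τ * (1 + u) * LU - ded)
      ≤ (τ * (1 + v) * LU) - (τ * (1 + u) * LU) := by
    have := max_sub_max_le (τ * (1 + u) * LU - ded) (τ * (1 + v) * LU - ded) (by linarith)
    linarith
  have h2 : ξ * max 0 (τ * (1 + u) * LU - ded) ≤ ξ * max 0 (τ * (1 + v) * LU - ded) :=
    mul_le_mul_of_nonneg_left (max_le_max le_rfl (by linarith)) hξ0
  have h3 : min Cov (ξ * max 0 (τ * (1 + v) * LU - ded))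
      - min Cov (ξ * max 0 (τ * (1 + u) * LU - ded))
      ≤ ξ * max 0 (τ * (1 + v) * LU - ded) - ξ * max 0 (τ * (1 + u) * LU - ded) :=
    min_sub_min_le _ _ _ h2
  have h4 : ξ * max 0 (τ * (1 + v) * LU - ded) - ξ * max 0 (τ * (1 + u) * LU - ded)
      ≤ ξ * (τ * (v - u) * LU) := by nlinarith [mul_le_mul_of_nonneg_left h1 hξ0]
  have h5 : 0 < τ * (v - u) * ((1 - ξ) * LU - LP) :=
    mul_pos (mul_pos hτ0 (by linarith)) (by linarith)
  have hring : τ * (1 + v) * LU - τ * (1 + u) * LU = τ * (v - u) * LU := by ring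
  have hring2 : τ * (1 + v) * LP - τ * (1 + u) * LP = τ * (v - u) * LP := by ring
  have hring3 : τ * (v - u) * ((1 - ξ) * LU - LP)
      = τ * (v - u) * LU - ξ * (τ * (v - u) * LU) - τ * (v - u) * LP := by ring
  unfold fIx
  linarith

lemma geo_sum_le {a b : ℝ} (ha : 0 ≤ a) (hab : a ≤ b) {K₁ K₂ : ℕ} (hK : K₁ ≤ K₂) :
    ∑ k ∈ Finset.range K₁, a ^ k ≤ ∑ k ∈ Finset.range K₂, b ^ k := by
  have hb : 0 ≤ b := ha.trans hab
  calc ∑ k ∈ Finset.range K₁, a ^ k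
      ≤ ∑ k ∈ Finset.range K₁, b ^ k :=
        Finset.sum_le_sum fun k _ => pow_le_pow_left₀ ha hab k
    _ ≤ ∑ k ∈ Finset.range K₂, b ^ k :=
        Finset.sum_le_sum_of_subset_of_nonneg (Finset.range_subset_range.2 hK)
          fun k _ _ => pow_nonneg hb k

lemma one_le_geo_sum {b : ℝ} (hb : 0 ≤ b) {K : ℕ} (hK : 1 ≤ K) :
    (1 : ℝ) ≤ ∑ k ∈ Finset.range K, b ^ k := by
  have h0 : ∑ k ∈ Finset.range 1, b ^ k = 1 := by simp
  calc (1:ℝ) = ∑ k ∈ Finset.range 1, b ^ k := h0.symm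
    _ ≤ ∑ k ∈ Finset.range K, b ^ k :=
        Finset.sum_le_sum_of_subset_of_nonneg (Finset.range_subset_range.2 hK)
          fun k _ _ => pow_nonneg hb k

set_option maxHeartbeats 2000000 in
/-- monotonicity of equilibrium protection in the propagation
parameter `K`: if `K₁ ≤ K₂` and `x¹`, `x²` are Nash equilibria of the games with
parameters `K₁`, `K₂` respectively, then the total protected mass at `x¹` is at
most that at `x²`. -/
theorem NE_protection_mono_in_K (Dmax : ℕ) (hD : 1 ≤ Dmax)
    (m : ℕ → ℝ) (hm : ∀ d ∈ Dset Dmax, 0 < m d)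
    (pP pU βIA τ LP LU cP cI ξ ded Cov : ℝ)
    (hpP : 0 ≤ pP) (hp : pP < pU) (hpU : pU ≤ 1)
    (hβ0 : 0 < βIA) (hβ1 : βIA ≤ 1)
    (hτ0 : 0 < τ) (hτ1 : τ ≤ 1)
    (hLP : 0 < LP) (hL : LP < (1 - ξ) * LU)
    (hξ0 : 0 < ξ) (hξ1 : ξ ≤ 1) (hCov : 0 ≤ Cov) (hded : 0 ≤ ded)
    (hc : cI + ded < cP)
    (K₁ K₂ : ℕ) (hK₁ : 1 ≤ K₁) (hK : K₁ ≤ K₂)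
    (x₁ x₂ : ℕ → Act → ℝ)
    (hNE₁ : isNE Dmax m pP pU βIA τ LP LU cP cI ξ ded Cov K₁ x₁)
    (hNE₂ : isNE Dmax m pP pU βIA τ LP LU cP cI ξ ded Cov K₂ x₂) :
    ∑ d ∈ Dset Dmax, x₁ d Act.P ≤ ∑ d ∈ Dset Dmax, x₂ d Act.P := by
  classical
  by_contra hcon
  push_neg at hcon
  obtain ⟨d₀, hd₀, hlt₀⟩ := Finset.exists_lt_of_sum_lt hcon
  have hpU0 : 0 < pU := lt_of_le_of_lt hpP hp
  have hΔp : 0 < pU - pP := sub_pos.2 hp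
  have hLU : 0 < LU := by
    by_contra hLU'
    push_neg at hLU'
    have : (1 - ξ) * LU ≤ 0 := mul_nonpos_of_nonneg_of_nonpos (by linarith) hLU'
    linarith
  have hLPU : LP < LU := by nlinarith [mul_pos hξ0 hLU]
  have hbd₁ : ∀ d ∈ Dset Dmax, 0 ≤ x₁ d Act.P ∧ x₁ d Act.P ≤ m d := by
    intro d hd
    obtain ⟨hnn, hsum⟩ := hNE₁.1 d hd
    exact ⟨hnn Act.P, by linarith [hnn Act.N, hnn Act.I]⟩
  have hbd₂ : ∀ d ∈ Dset Dmax, 0 ≤ x₂ d Act.P ∧ x₂ d Act.P ≤ m d := by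
    intro d hd
    obtain ⟨hnn, hsum⟩ := hNE₂.1 d hd
    exact ⟨hnn Act.P, by linarith [hnn Act.N, hnn Act.I]⟩
  have hx₁pos : 0 < x₁ d₀ Act.P := lt_of_le_of_lt (hbd₂ d₀ hd₀).1 hlt₀
  have hx₂ltm : x₂ d₀ Act.P < m d₀ := lt_of_lt_of_le hlt₀ (hbd₁ d₀ hd₀).2
  have hW : 0 < ∑ d' ∈ Dset Dmax, (d' : ℝ) * m d' := by
    apply Finset.sum_pos
    · intro d hd
      have hd1 : 1 ≤ d := (Finset.mem_Icc.mp hd).1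
      exact mul_pos (by exact_mod_cast Nat.lt_of_lt_of_le Nat.zero_lt_one hd1) (hm d hd)
    · exact ⟨1, Finset.mem_Icc.mpr ⟨le_refl 1, hD⟩⟩
  have hwgt : ∀ d ∈ Dset Dmax, 0 < wgt Dmax m d := by
    intro d hd
    have hd1 : 1 ≤ d := (Finset.mem_Icc.mp hd).1
    exact div_pos (mul_pos (by exact_mod_cast Nat.lt_of_lt_of_le Nat.zero_lt_one hd1)
      (hm d hd)) hW
  have hinner_nn : ∀ (xP : ℕ → ℝ) (d : ℕ), d ∈ Dset Dmax → 0 ≤ xP d → xP d ≤ m d →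
      0 ≤ (xP d / m d) * pP + (1 - xP d / m d) * pU := by
    intro xP d hd h0 h1
    have hmd := hm d hd
    have hg0 : 0 ≤ xP d / m d := div_nonneg h0 hmd.le
    have hg1 : xP d / m d ≤ 1 := (div_le_one hmd).2 h1
    nlinarith [mul_nonneg hg0 hpP,
      mul_nonneg (by linarith : (0:ℝ) ≤ 1 - xP d / m d) hpU0.le]
  have hinner_le : ∀ (xP xQ : ℕ → ℝ) (d : ℕ), d ∈ Dset Dmax → xQ d ≤ xP d →
      (xP d / m d) * pP + (1 - xP d / m d) * pU
        ≤ (xQ d / m d) * pP + (1 - xQ d / m d) * pU := by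
    intro xP xQ d hd hle
    have hmd := hm d hd
    have hdiv : xQ d / m d ≤ xP d / m d := by gcongr
    nlinarith [mul_nonneg (sub_nonneg.2 hdiv) hΔp.le]
  have hinner_lt : ∀ (xP xQ : ℕ → ℝ) (d : ℕ), d ∈ Dset Dmax → xQ d < xP d →
      (xP d / m d) * pP + (1 - xP d / m d) * pU
        < (xQ d / m d) * pP + (1 - xQ d / m d) * pU := by
    intro xP xQ d hd hltq
    have hmd := hm d hd
    have hdiv : xQ d / m d < xP d / m d := by gcongr
    nlinarith [mul_pos (sub_pos.2 hdiv) hΔp]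
  have hgam_le : ∀ (xP xQ : ℕ → ℝ), (∀ d ∈ Dset Dmax, xQ d ≤ xP d) →
      gam Dmax m pP pU βIA xP ≤ gam Dmax m pP pU βIA xQ := by
    intro xP xQ hle
    unfold gam
    apply mul_le_mul_of_nonneg_left _ hβ0.le
    apply Finset.sum_le_sum
    intro d hd
    exact mul_le_mul_of_nonneg_left (hinner_le xP xQ d hd (hle d hd)) (hwgt d hd).le
  have hgam_lt : ∀ (xP xQ : ℕ → ℝ), (∀ d ∈ Dset Dmax, xQ d ≤ xP d) →
      xQ d₀ < xP d₀ → gam Dmax m pP pU βIA xP < gam Dmax m pP pU βIA xQ := by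
    intro xP xQ hle hltq
    unfold gam
    apply mul_lt_mul_of_pos_left _ hβ0
    apply Finset.sum_lt_sum
    · intro d hd
      exact mul_le_mul_of_nonneg_left (hinner_le xP xQ d hd (hle d hd)) (hwgt d hd).le
    · exact ⟨d₀, hd₀, mul_lt_mul_of_pos_left (hinner_lt xP xQ d₀ hd₀ hltq) (hwgt d₀ hd₀)⟩
  have hlamb_le : ∀ (xP xQ : ℕ → ℝ), (∀ d ∈ Dset Dmax, xQ d ≤ xP d) →
      lamb Dmax m pP pU βIA xP ≤ lamb Dmax m pP pU βIA xQ := by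
    intro xP xQ hle
    unfold lamb
    apply mul_le_mul_of_nonneg_left _ hβ0.le
    apply Finset.sum_le_sum
    intro d hd
    have hd1 : (1:ℝ) ≤ (d:ℝ) := by exact_mod_cast (Finset.mem_Icc.mp hd).1
    exact mul_le_mul_of_nonneg_left (hinner_le xP xQ d hd (hle d hd))
      (mul_nonneg (hwgt d hd).le (by linarith))
  have hgam_nn : ∀ (xP : ℕ → ℝ), (∀ d ∈ Dset Dmax, 0 ≤ xP d ∧ xP d ≤ m d) →
      0 ≤ gam Dmax m pP pU βIA xP := by
    intro xP hb
    unfold gam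
    apply mul_nonneg hβ0.le
    apply Finset.sum_nonneg
    intro d hd
    exact mul_nonneg (hwgt d hd).le (hinner_nn xP d hd (hb d hd).1 (hb d hd).2)
  have hlamb_nn : ∀ (xP : ℕ → ℝ), (∀ d ∈ Dset Dmax, 0 ≤ xP d ∧ xP d ≤ m d) →
      0 ≤ lamb Dmax m pP pU βIA xP := by
    intro xP hb
    unfold lamb
    apply mul_nonneg hβ0.le
    apply Finset.sum_nonneg
    intro d hd
    have hd1 : (1:ℝ) ≤ (d:ℝ) := by exact_mod_cast (Finset.mem_Icc.mp hd).1
    exact mul_nonneg (mul_nonneg (hwgt d hd).le (by linarith))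
      (hinner_nn xP d hd (hb d hd).1 (hb d hd).2)
  have hgam1nn : 0 ≤ gam Dmax m pP pU βIA (fun d' => x₁ d' Act.P) :=
    hgam_nn _ (fun d hd => hbd₁ d hd)
  have hgam2nn : 0 ≤ gam Dmax m pP pU βIA (fun d' => x₂ d' Act.P) :=
    hgam_nn _ (fun d hd => hbd₂ d hd)
  have hlamb1nn : 0 ≤ lamb Dmax m pP pU βIA (fun d' => x₁ d' Act.P) :=
    hlamb_nn _ (fun d hd => hbd₁ d hd)
  have hlamb2nn : 0 ≤ lamb Dmax m pP pU βIA (fun d' => x₂ d' Act.P) :=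
    hlamb_nn _ (fun d hd => hbd₂ d hd)
  -- equilibrium best-response facts
  have hPbest : ∀ (K : ℕ) (x : ℕ → Act → ℝ),
      isNE Dmax m pP pU βIA τ LP LU cP cI ξ ded Cov K x →
      ∀ d ∈ Dset Dmax, 0 < x d Act.P →
      0 ≤ fNx τ LP LU cP ((d : ℝ) * expo Dmax m pP pU βIA K (fun d' => x d' Act.P)) ∧
      0 ≤ fIx τ LP LU cP cI ξ ded Cov
          ((d : ℝ) * expo Dmax m pP pU βIA K (fun d' => x d' Act.P)) := by
    intro K x hne d hd hpos
    have h1 := hne.2 d hd Act.P hpos Act.N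
    have h2 := hne.2 d hd Act.P hpos Act.I
    have e1 := costN_sub Dmax m pP pU βIA τ LP LU cP cI ξ ded Cov K (fun d' => x d' Act.P) d
    have e2 := costI_sub Dmax m pP pU βIA τ LP LU cP cI ξ ded Cov K (fun d' => x d' Act.P) d
    constructor <;> linarith
  have hQbest : ∀ (K : ℕ) (x : ℕ → Act → ℝ),
      isNE Dmax m pP pU βIA τ LP LU cP cI ξ ded Cov K x →
      ∀ d ∈ Dset Dmax, x d Act.P < m d →
      fNx τ LP LU cP ((d : ℝ) * expo Dmax m pP pU βIA K (fun d' => x d' Act.P)) ≤ 0 ∨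
      fIx τ LP LU cP cI ξ ded Cov
        ((d : ℝ) * expo Dmax m pP pU βIA K (fun d' => x d' Act.P)) ≤ 0 := by
    intro K x hne d hd hltm
    obtain ⟨hnn, hsum⟩ := hne.1 d hd
    have e1 := costN_sub Dmax m pP pU βIA τ LP LU cP cI ξ ded Cov K (fun d' => x d' Act.P) d
    have e2 := costI_sub Dmax m pP pU βIA τ LP LU cP cI ξ ded Cov K (fun d' => x d' Act.P) d
    rcases lt_or_ge 0 (x d Act.N) with hN | hN
    · left
      have h1 := hne.2 d hd Act.N hN Act.P
      linarith
    · right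
      have hI : 0 < x d Act.I := by linarith [hnn Act.N, hnn Act.I]
      have h1 := hne.2 d hd Act.I hI Act.P
      linarith
  have hfull : ∀ (K : ℕ) (x : ℕ → Act → ℝ),
      isNE Dmax m pP pU βIA τ LP LU cP cI ξ ded Cov K x →
      ∀ d ∈ Dset Dmax,
      0 < fNx τ LP LU cP ((d : ℝ) * expo Dmax m pP pU βIA K (fun d' => x d' Act.P)) →
      0 < fIx τ LP LU cP cI ξ ded Cov
          ((d : ℝ) * expo Dmax m pP pU βIA K (fun d' => x d' Act.P)) →
      x d Act.P = m d := by
    intro K x hne d hd hfN hfI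
    obtain ⟨hnn, hsum⟩ := hne.1 d hd
    have e1 := costN_sub Dmax m pP pU βIA τ LP LU cP cI ξ ded Cov K (fun d' => x d' Act.P) d
    have e2 := costI_sub Dmax m pP pU βIA τ LP LU cP cI ξ ded Cov K (fun d' => x d' Act.P) d
    have hN0 : x d Act.N = 0 := by
      by_contra h
      have hpos : 0 < x d Act.N := (hnn Act.N).lt_of_ne (Ne.symm h)
      have := hne.2 d hd Act.N hpos Act.P
      linarith
    have hI0 : x d Act.I = 0 := by
      by_contra h
      have hpos : 0 < x d Act.I := (hnn Act.I).lt_of_ne (Ne.symm h)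
      have := hne.2 d hd Act.I hpos Act.P
      linarith
    linarith
  have hzero : ∀ (K : ℕ) (x : ℕ → Act → ℝ),
      isNE Dmax m pP pU βIA τ LP LU cP cI ξ ded Cov K x →
      ∀ d ∈ Dset Dmax,
      (fNx τ LP LU cP ((d : ℝ) * expo Dmax m pP pU βIA K (fun d' => x d' Act.P)) < 0 ∨
       fIx τ LP LU cP cI ξ ded Cov
         ((d : ℝ) * expo Dmax m pP pU βIA K (fun d' => x d' Act.P)) < 0) →
      x d Act.P = 0 := by
    intro K x hne d hd hneg
    by_contra h
    have hpos : 0 < x d Act.P := ((hne.1 d hd).1 Act.P).lt_of_ne (Ne.symm h)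
    obtain ⟨h1, h2⟩ := hPbest K x hne d hd hpos
    rcases hneg with h' | h' <;> linarith
  -- step 1 : e₂ ≤ e₁
  have hP₁ := hPbest K₁ x₁ hNE₁ d₀ hd₀ hx₁pos
  have hQ₂ := hQbest K₂ x₂ hNE₂ d₀ hd₀ hx₂ltm
  have hd₀1 : (1:ℝ) ≤ (d₀:ℝ) := by exact_mod_cast (Finset.mem_Icc.mp hd₀).1
  have hord : expo Dmax m pP pU βIA K₂ (fun d' => x₂ d' Act.P)
      ≤ expo Dmax m pP pU βIA K₁ (fun d' => x₁ d' Act.P) := by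
    by_contra hc
    push_neg at hc
    have hu : (d₀:ℝ) * expo Dmax m pP pU βIA K₁ (fun d' => x₁ d' Act.P)
        < (d₀:ℝ) * expo Dmax m pP pU βIA K₂ (fun d' => x₂ d' Act.P) :=
      mul_lt_mul_of_pos_left hc (by linarith)
    rcases hQ₂ with hq | hq
    · linarith [fNx_mono cP hτ0 hLPU hu, hP₁.1]
    · linarith [fIx_mono cP cI ded Cov hτ0 hLU hξ0.le hL hu, hP₁.2]
  rcases hord.eq_or_lt with heq | hltE
  · -- tie case : e₂ = e₁
    have hexpo2nn : 0 ≤ expo Dmax m pP pU βIA K₂ (fun d' => x₂ d' Act.P) := by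
      unfold expo
      exact mul_nonneg hgam2nn (Finset.sum_nonneg fun k _ => pow_nonneg hlamb2nn k)
    rcases hexpo2nn.eq_or_lt with hE0 | hEpos
    · -- e₂ = 0 : full protection at d₀ in x₂, contradiction
      have hS2 : (1:ℝ) ≤ ∑ k ∈ Finset.range K₂,
          lamb Dmax m pP pU βIA (fun d' => x₂ d' Act.P) ^ k :=
        one_le_geo_sum hlamb2nn (hK₁.trans hK)
      have hEeq : gam Dmax m pP pU βIA (fun d' => x₂ d' Act.P) *
          ∑ k ∈ Finset.range K₂, lamb Dmax m pP pU βIA (fun d' => x₂ d' Act.P) ^ k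
          = 0 := by
        have h' := hE0.symm
        unfold expo at h'
        exact h'
      have hgam0 : gam Dmax m pP pU βIA (fun d' => x₂ d' Act.P) = 0 := by
        have hle : gam Dmax m pP pU βIA (fun d' => x₂ d' Act.P) ≤ 0 := by
          nlinarith [mul_le_mul_of_nonneg_left hS2 hgam2nn]
        linarith
      have hsum0 : ∑ d ∈ Dset Dmax, wgt Dmax m d *
          ((x₂ d Act.P / m d) * pP + (1 - x₂ d Act.P / m d) * pU) = 0 := by
        unfold gam at hgam0
        rcases mul_eq_zero.mp hgam0 with h | h
        · exact absurd h (ne_of_gt hβ0)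
        · exact h
      have hterm0 := (Finset.sum_eq_zero_iff_of_nonneg (fun d hd =>
        mul_nonneg (hwgt d hd).le
          (hinner_nn (fun d' => x₂ d' Act.P) d hd (hbd₂ d hd).1 (hbd₂ d hd).2))).mp
        hsum0 d₀ hd₀
      have hinner0 : (x₂ d₀ Act.P / m d₀) * pP + (1 - x₂ d₀ Act.P / m d₀) * pU = 0 := by
        rcases mul_eq_zero.mp hterm0 with h | h
        · exact absurd h (ne_of_gt (hwgt d₀ hd₀))
        · exact h
      have hmd := hm d₀ hd₀
      have hg0 : 0 ≤ x₂ d₀ Act.P / m d₀ := div_nonneg (hbd₂ d₀ hd₀).1 hmd.le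
      have hg1 : x₂ d₀ Act.P / m d₀ ≤ 1 := (div_le_one hmd).2 (hbd₂ d₀ hd₀).2
      have h1mg : (1 - x₂ d₀ Act.P / m d₀) * pU = 0 :=
        le_antisymm (by nlinarith [mul_nonneg hg0 hpP])
          (mul_nonneg (by linarith) hpU0.le)
      have hgone : 1 - x₂ d₀ Act.P / m d₀ = 0 := by
        rcases mul_eq_zero.mp h1mg with h | h
        · exact h
        · exact absurd h (ne_of_gt hpU0)
      have : x₂ d₀ Act.P = m d₀ := by
        have hdiv1 : x₂ d₀ Act.P / m d₀ = 1 := by linarith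
        rwa [div_eq_one_iff_eq (ne_of_gt hmd)] at hdiv1
      linarith
    · -- e₂ = e₁ > 0
      have hE1pos : 0 < expo Dmax m pP pU βIA K₁ (fun d' => x₁ d' Act.P) := heq ▸ hEpos
      have hpt : ∀ d ∈ Dset Dmax, d ≠ d₀ → x₁ d Act.P = x₂ d Act.P := by
        intro d hd hne
        rcases lt_trichotomy d d₀ with hdd | hdd | hdd
        · have hcast : (d:ℝ) < (d₀:ℝ) := Nat.cast_lt.mpr hdd
          have hu1 : (d:ℝ) * expo Dmax m pP pU βIA K₁ (fun d' => x₁ d' Act.P)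
              < (d₀:ℝ) * expo Dmax m pP pU βIA K₁ (fun d' => x₁ d' Act.P) :=
            mul_lt_mul_of_pos_right hcast hE1pos
          have hu2 : (d:ℝ) * expo Dmax m pP pU βIA K₂ (fun d' => x₂ d' Act.P)
              < (d₀:ℝ) * expo Dmax m pP pU βIA K₂ (fun d' => x₂ d' Act.P) :=
            mul_lt_mul_of_pos_right hcast hEpos
          rcases hQ₂ with hq | hq
          · have hz₂ : x₂ d Act.P = 0 := hzero K₂ x₂ hNE₂ d hd
              (Or.inl (by linarith [fNx_mono cP hτ0 hLPU hu2]))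
            have hz₁ : x₁ d Act.P = 0 := hzero K₁ x₁ hNE₁ d hd
              (Or.inl (by
                rw [heq] at hq
                linarith [fNx_mono cP hτ0 hLPU hu1]))
            rw [hz₁, hz₂]
          · have hz₂ : x₂ d Act.P = 0 := hzero K₂ x₂ hNE₂ d hd
              (Or.inr (by linarith [fIx_mono cP cI ded Cov hτ0 hLU hξ0.le hL hu2]))
            have hz₁ : x₁ d Act.P = 0 := hzero K₁ x₁ hNE₁ d hd
              (Or.inr (by
                rw [heq] at hq
                linarith [fIx_mono cP cI ded Cov hτ0 hLU hξ0.le hL hu1]))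
            rw [hz₁, hz₂]
        · exact absurd hdd hne
        · have hcast : (d₀:ℝ) < (d:ℝ) := Nat.cast_lt.mpr hdd
          have hu1 : (d₀:ℝ) * expo Dmax m pP pU βIA K₁ (fun d' => x₁ d' Act.P)
              < (d:ℝ) * expo Dmax m pP pU βIA K₁ (fun d' => x₁ d' Act.P) :=
            mul_lt_mul_of_pos_right hcast hE1pos
          have hfN1 : 0 < fNx τ LP LU cP
              ((d:ℝ) * expo Dmax m pP pU βIA K₁ (fun d' => x₁ d' Act.P)) :=
            lt_of_le_of_lt hP₁.1 (fNx_mono cP hτ0 hLPU hu1)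
          have hfI1 : 0 < fIx τ LP LU cP cI ξ ded Cov
              ((d:ℝ) * expo Dmax m pP pU βIA K₁ (fun d' => x₁ d' Act.P)) :=
            lt_of_le_of_lt hP₁.2 (fIx_mono cP cI ded Cov hτ0 hLU hξ0.le hL hu1)
          have h₁ : x₁ d Act.P = m d := hfull K₁ x₁ hNE₁ d hd hfN1 hfI1
          have h₂ : x₂ d Act.P = m d := hfull K₂ x₂ hNE₂ d hd
            (by rw [heq]; exact hfN1) (by rw [heq]; exact hfI1)
          rw [h₁, h₂]
      have hle_all : ∀ d ∈ Dset Dmax,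
          (fun d' => x₂ d' Act.P) d ≤ (fun d' => x₁ d' Act.P) d := by
        intro d hd
        by_cases hne : d = d₀
        · subst hne; exact hlt₀.le
        · exact le_of_eq (hpt d hd hne).symm
      have hgamlt : gam Dmax m pP pU βIA (fun d' => x₁ d' Act.P)
          < gam Dmax m pP pU βIA (fun d' => x₂ d' Act.P) :=
        hgam_lt _ _ hle_all hlt₀
      have hlamble : lamb Dmax m pP pU βIA (fun d' => x₁ d' Act.P)
          ≤ lamb Dmax m pP pU βIA (fun d' => x₂ d' Act.P) :=
        hlamb_le _ _ hle_all
      have hSle : ∑ k ∈ Finset.range K₁,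
            lamb Dmax m pP pU βIA (fun d' => x₁ d' Act.P) ^ k
          ≤ ∑ k ∈ Finset.range K₂,
            lamb Dmax m pP pU βIA (fun d' => x₂ d' Act.P) ^ k :=
        geo_sum_le hlamb1nn hlamble hK
      have hS2ge1 : (1:ℝ) ≤ ∑ k ∈ Finset.range K₂,
          lamb Dmax m pP pU βIA (fun d' => x₂ d' Act.P) ^ k :=
        one_le_geo_sum hlamb2nn (hK₁.trans hK)
      have hEE : expo Dmax m pP pU βIA K₁ (fun d' => x₁ d' Act.P)
          < expo Dmax m pP pU βIA K₂ (fun d' => x₂ d' Act.P) := by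
        unfold expo
        calc gam Dmax m pP pU βIA (fun d' => x₁ d' Act.P) *
              ∑ k ∈ Finset.range K₁, lamb Dmax m pP pU βIA (fun d' => x₁ d' Act.P) ^ k
            ≤ gam Dmax m pP pU βIA (fun d' => x₁ d' Act.P) *
              ∑ k ∈ Finset.range K₂, lamb Dmax m pP pU βIA (fun d' => x₂ d' Act.P) ^ k :=
              mul_le_mul_of_nonneg_left hSle hgam1nn
          _ < gam Dmax m pP pU βIA (fun d' => x₂ d' Act.P) *
              ∑ k ∈ Finset.range K₂, lamb Dmax m pP pU βIA (fun d' => x₂ d' Act.P) ^ k :=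
              mul_lt_mul_of_pos_right hgamlt (by linarith)
      rw [heq] at hEE
      exact lt_irrefl _ hEE
  · -- e₂ < e₁
    have hpt : ∀ d ∈ Dset Dmax,
        (fun d' => x₂ d' Act.P) d ≤ (fun d' => x₁ d' Act.P) d := by
      intro d hd
      rcases ((hbd₂ d hd).1).eq_or_lt with h0 | hpos
      · simpa using (h0 ▸ (hbd₁ d hd).1 : x₂ d Act.P ≤ x₁ d Act.P)
      · have hP₂' := hPbest K₂ x₂ hNE₂ d hd hpos
        have hd1 : (1:ℝ) ≤ (d:ℝ) := by exact_mod_cast (Finset.mem_Icc.mp hd).1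
        have hu : (d:ℝ) * expo Dmax m pP pU βIA K₂ (fun d' => x₂ d' Act.P)
            < (d:ℝ) * expo Dmax m pP pU βIA K₁ (fun d' => x₁ d' Act.P) :=
          mul_lt_mul_of_pos_left hltE (by linarith)
        have h₁ : x₁ d Act.P = m d := hfull K₁ x₁ hNE₁ d hd
          (lt_of_le_of_lt hP₂'.1 (fNx_mono cP hτ0 hLPU hu))
          (lt_of_le_of_lt hP₂'.2 (fIx_mono cP cI ded Cov hτ0 hLU hξ0.le hL hu))
        show x₂ d Act.P ≤ x₁ d Act.P
        rw [h₁]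
        exact (hbd₂ d hd).2
    have hgamle : gam Dmax m pP pU βIA (fun d' => x₁ d' Act.P)
        ≤ gam Dmax m pP pU βIA (fun d' => x₂ d' Act.P) :=
      hgam_le _ _ hpt
    have hlamble : lamb Dmax m pP pU βIA (fun d' => x₁ d' Act.P)
        ≤ lamb Dmax m pP pU βIA (fun d' => x₂ d' Act.P) :=
      hlamb_le _ _ hpt
    have hSle : ∑ k ∈ Finset.range K₁,
          lamb Dmax m pP pU βIA (fun d' => x₁ d' Act.P) ^ k
        ≤ ∑ k ∈ Finset.range K₂,
          lamb Dmax m pP pU βIA (fun d' => x₂ d' Act.P) ^ k :=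
      geo_sum_le hlamb1nn hlamble hK
    have hS1nn : 0 ≤ ∑ k ∈ Finset.range K₁,
        lamb Dmax m pP pU βIA (fun d' => x₁ d' Act.P) ^ k :=
      Finset.sum_nonneg fun k _ => pow_nonneg hlamb1nn k
    have hEE : expo Dmax m pP pU βIA K₁ (fun d' => x₁ d' Act.P)
        ≤ expo Dmax m pP pU βIA K₂ (fun d' => x₂ d' Act.P) := by
      unfold expo
      exact mul_le_mul hgamle hSle hS1nn hgam2nn
    linarith
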